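/- Let b : ℝ≥0 → (0,∞) be strictly decreasing to 0 on ℝ≥0 with c(x) := ∫_{Δ(x)} b(|y|) dy finite for all x, where Δ(x) = {y : y_j ≥ x_j ∀j}. Suppose b is long-tailed. Then there exists λ₁ > 0 such that for all λ ∈ (0, λ₁), every x with c(x) < λ satisfies: for all y ∈ Δ(x), b(|y|) < λ. In other words, the sublevel set {c < λ} is contained in Θ_λ(p), where p(x) = b(|x|) and Θ_λ(p) = {x : Δ(x) ⊂ {p < λ}}. -/

import Mathlib

open MeasureTheory Filter Metric

lemma euclid_abs_coord_le {d : ℕ} (z : EuclideanSpace ℝ (Fin d)) (j : Fin d) :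
    |z j| ≤ ‖z‖ := by
  rw [EuclideanSpace.norm_eq]
  have h1 : |z j| = Real.sqrt (‖z j‖ ^ 2) := by
    rw [Real.sqrt_sq_eq_abs, Real.norm_eq_abs, abs_abs]
  rw [h1]
  apply Real.sqrt_le_sqrt
  exact Finset.single_le_sum (f := fun i => ‖z i‖ ^ 2) (fun i _ => by positivity)
    (Finset.mem_univ j)

lemma euclid_norm_const {d : ℕ} {c : ℝ} (hc : 0 ≤ c)
    (v : EuclideanSpace ℝ (Fin d)) (hv : ∀ j, v j = c) :
    ‖v‖ = c * Real.sqrt d := by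
  rw [EuclideanSpace.norm_eq]
  simp only [hv, Real.norm_eq_abs, sq_abs, Finset.sum_const, Finset.card_univ,
    Fintype.card_fin, nsmul_eq_mul]
  rw [Real.sqrt_mul (by positivity), Real.sqrt_sq hc, mul_comm]

theorem sublevel_subset_Theta (d : ℕ) (hd : 0 < d) (b : ℝ → ℝ)
    (hb_pos : ∀ s, 0 ≤ s → 0 < b s)
    (hb_anti : StrictAntiOn b (Set.Ici 0))
    (hb_lim : Tendsto b atTop (nhds 0))
    (hb_int : Integrable (fun y : EuclideanSpace ℝ (Fin d) => b ‖y‖))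
    (hb_lt : ∀ τ : ℝ, 0 ≤ τ →
      Tendsto (fun s => b (s + τ) / b s) atTop (nhds 1)) :
    ∃ lam₁ > (0 : ℝ), ∀ lam ∈ Set.Ioo (0 : ℝ) lam₁,
      ∀ x : EuclideanSpace ℝ (Fin d),
        (∫ y in {y : EuclideanSpace ℝ (Fin d) | ∀ j, x j ≤ y j}, b ‖y‖) < lam →
        ∀ y : EuclideanSpace ℝ (Fin d), (∀ j, x j ≤ y j) → b ‖y‖ < lam := by
  classical
  set E := EuclideanSpace ℝ (Fin d) with hE
  have hbnn : ∀ s : ℝ, 0 ≤ s → 0 ≤ b s := fun s hs => (hb_pos s hs).le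
  have hanti : AntitoneOn b (Set.Ici 0) := hb_anti.antitoneOn
  have hnt : Nontrivial E := by
    refine ⟨0, (WithLp.toLp 2 (fun _ => 1 : Fin d → ℝ) : E), fun h => ?_⟩
    exact zero_ne_one (α := ℝ) (congrArg (fun v : E => v ⟨0, hd⟩) h)
  have hV₁pos : 0 < (volume (ball (0 : E) 1)).toReal :=
    ENNReal.toReal_pos (measure_ball_pos _ _ one_pos).ne' measure_ball_lt_top.ne
  set V₁ := (volume (ball (0 : E) 1)).toReal with hV₁
  set c := max 1 (2 / V₁) with hcdef
  have hc1 : 1 ≤ c := le_max_left _ _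
  have hc0 : 0 < c := lt_of_lt_of_le one_pos hc1
  set V := (volume (ball (0 : E) c)).toReal with hVdef
  have hVform : volume (ball (0 : E) c)
      = ENNReal.ofReal (c ^ d) * volume (ball (0 : E) 1) := by
    rw [Measure.addHaar_ball volume (0 : E) hc0.le, finrank_euclideanSpace_fin]
  have hV2 : 2 ≤ V := by
    have hVeq : V = c ^ d * V₁ := by
      rw [hVdef, hVform, ENNReal.toReal_mul, ENNReal.toReal_ofReal (by positivity)]
    rw [hVeq]
    have hcd : c ≤ c ^ d := le_self_pow₀ hc1 hd.ne'
    have h2c : 2 / V₁ ≤ c := le_max_right _ _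
    calc 2 = (2 / V₁) * V₁ := by field_simp
      _ ≤ c * V₁ := mul_le_mul_of_nonneg_right h2c hV₁pos.le
      _ ≤ c ^ d * V₁ := mul_le_mul_of_nonneg_right hcd hV₁pos.le
  have hV0 : 0 < V := lt_of_lt_of_le two_pos hV2
  set τ := c * (Real.sqrt d + 1) with hτdef
  have hτ0 : 0 ≤ τ := by positivity
  have hev : ∀ᶠ s in atTop, 3 / 4 < b (s + τ) / b s :=
    (hb_lt τ hτ0).eventually (eventually_gt_nhds (by norm_num))
  obtain ⟨S₀, hS₀⟩ := eventually_atTop.mp hev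
  set S := max S₀ 0 with hSdef
  have hS0 : 0 ≤ S := le_max_right _ _
  have key : ∀ s, 0 ≤ s → S ≤ s → b s ≤ V * b (s + τ) := by
    intro s hs hSs
    have h34 : 3 / 4 < b (s + τ) / b s := hS₀ s (le_trans (le_max_left _ _) hSs)
    have hbs : 0 < b s := hb_pos s hs
    have h34' : (3 / 4 : ℝ) * b s < b (s + τ) := (lt_div_iff₀ hbs).mp h34
    nlinarith [hb_pos (s + τ) (by linarith)]
  have hbSτ : 0 < b (S + τ) := hb_pos _ (by linarith)
  refine ⟨V * b (S + τ), mul_pos hV0 hbSτ, ?_⟩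
  rintro lam ⟨hlam0, hlam1⟩ x hcx y hxy
  by_contra hby
  push_neg at hby
  -- the ball around w := y + c·1 of radius c is inside Δ(x)
  set w : E := WithLp.toLp 2 (fun j => y j + c : Fin d → ℝ) with hwdef
  have hball : ball w c ⊆ {z : E | ∀ j, x j ≤ z j} := by
    intro z hz j
    have h1 : |(z - w) j| ≤ ‖z - w‖ := euclid_abs_coord_le _ j
    have h2 : ‖z - w‖ < c := mem_ball_iff_norm.mp hz
    have h3 : (z - w) j = z j - (y j + c) := rfl
    rw [h3] at h1
    have h4 := abs_le.mp (le_of_lt (lt_of_le_of_lt h1 h2))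
    have := hxy j
    linarith [h4.1]
  have hwnorm : ‖w‖ ≤ ‖y‖ + c * Real.sqrt d := by
    have hwy : ‖w - y‖ = c * Real.sqrt d :=
      euclid_norm_const hc0.le (w - y) (fun j => by
        show w j - y j = c
        simp [hwdef])
    have := norm_sub_norm_le w y
    linarith
  have hnormz : ∀ z ∈ ball w c, ‖z‖ ≤ ‖y‖ + τ := by
    intro z hz
    have h2 : ‖z - w‖ < c := mem_ball_iff_norm.mp hz
    have h5 : ‖z‖ - ‖w‖ ≤ ‖z - w‖ := norm_sub_norm_le z w
    rw [hτdef]; nlinarith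
  -- integrability
  have hInt1 : IntegrableOn (fun z : E => b ‖z‖) {z : E | ∀ j, x j ≤ z j} volume :=
    hb_int.integrableOn
  have hIntBall : IntegrableOn (fun z : E => b ‖z‖) (ball w c) volume :=
    hb_int.integrableOn
  have step1 : (∫ z in ball w c, b ‖z‖) ≤ ∫ z in {z : E | ∀ j, x j ≤ z j}, b ‖z‖ :=
    setIntegral_mono_set hInt1
      (Eventually.of_forall fun z => hbnn _ (norm_nonneg z)) (hball.eventuallyLE)
  have step2 : V * b (‖y‖ + τ) ≤ ∫ z in ball w c, b ‖z‖ := by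
    have hmono : (∫ _z in ball w c, b (‖y‖ + τ)) ≤ ∫ z in ball w c, b ‖z‖ := by
      refine setIntegral_mono_on (integrableOn_const measure_ball_lt_top.ne)
        hIntBall measurableSet_ball ?_
      intro z hz
      exact hanti (Set.mem_Ici.mpr (norm_nonneg z))
        (Set.mem_Ici.mpr (by positivity)) (hnormz z hz)
    have hconst : (∫ _z in ball w c, b (‖y‖ + τ)) = V * b (‖y‖ + τ) := by
      rw [setIntegral_const, measureReal_def, Measure.addHaar_ball_center, smul_eq_mul, hVdef]
    linarith
  have step3 : lam ≤ V * b (‖y‖ + τ) := by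
    rcases le_or_gt S ‖y‖ with h | h
    · exact le_trans hby (key ‖y‖ (norm_nonneg y) h)
    · have : b (S + τ) ≤ b (‖y‖ + τ) :=
        hanti (Set.mem_Ici.mpr (by positivity)) (Set.mem_Ici.mpr (by linarith)) (by linarith)
      calc lam ≤ V * b (S + τ) := hlam1.le
        _ ≤ V * b (‖y‖ + τ) := mul_le_mul_of_nonneg_left this hV0.le
  linarith
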